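/- Let γ be real with γ ∉ {0,1}. The complex equation (1-|w|^2)w + γ(1-γ)w* = (1-2γ)(1-|w|^2) with w = x+iy and y ≠ 0 has exactly the two solutions w = (1-2γ)/2 ± i√3/2. -/

import Mathlib

theorem stmt_11 (γ : ℝ) (h0 : γ ≠ 0) (h1 : γ ≠ 1) (w : ℂ) (hw : w.im ≠ 0) :
    ((1 - (‖w‖ : ℂ) ^ 2) * w + (γ : ℂ) * (1 - γ) * (starRingEnd ℂ w)
        = (1 - 2 * γ) * (1 - (‖w‖ : ℂ) ^ 2))
      ↔ w = ((1 - 2 * γ) / 2 : ℂ) + Complex.I * (Real.sqrt 3 / 2 : ℝ)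
        ∨ w = ((1 - 2 * γ) / 2 : ℂ) - Complex.I * (Real.sqrt 3 / 2 : ℝ) := by
  have habs : (‖w‖) ^ 2 = w.re ^ 2 + w.im ^ 2 := by
    rw [Complex.sq_norm, Complex.normSq_apply]; ring
  have habsC : ((‖w‖ : ℂ)) ^ 2 = ((w.re ^ 2 + w.im ^ 2 : ℝ) : ℂ) := by
    rw [← Complex.ofReal_pow, habs]
  rw [habsC]
  have hγ : γ * (1 - γ) ≠ 0 := by
    intro h
    rcases mul_eq_zero.1 h with h | h
    · exact h0 h
    · exact h1 (by linarith)
  have hs3 : (Real.sqrt 3) ^ 2 = 3 := Real.sq_sqrt (by norm_num)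
  have hre2 : ∀ x : ℝ, ((x : ℂ) ^ 2).re = x ^ 2 := fun x => by
    rw [← Complex.ofReal_pow]; exact Complex.ofReal_re _
  have him2 : ∀ x : ℝ, ((x : ℂ) ^ 2).im = 0 := fun x => by
    rw [← Complex.ofReal_pow]; exact Complex.ofReal_im _
  have hA : ((1 - 2 * (γ : ℂ)) / 2) = (((1 - 2 * γ) / 2 : ℝ) : ℂ) := by push_cast; ring
  constructor
  · intro h
    have hre := congrArg Complex.re h
    have him := congrArg Complex.im h
    simp [Complex.mul_re, Complex.mul_im, Complex.conj_re, Complex.conj_im,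
      hre2, him2] at hre him
    have key : 1 - (w.re ^ 2 + w.im ^ 2) = γ * (1 - γ) := by
      have h2 : (1 - (w.re ^ 2 + w.im ^ 2) - γ * (1 - γ)) * w.im = 0 := by
        nlinarith [him]
      have := (mul_eq_zero.1 h2).resolve_right hw
      linarith
    have hx : w.re = (1 - 2 * γ) / 2 := by
      have h3 : γ * (1 - γ) * (2 * w.re - (1 - 2 * γ)) = 0 := by
        rw [key] at hre; linear_combination hre
      have := (mul_eq_zero.1 h3).resolve_left hγ
      linarith
    have hy2 : w.im ^ 2 = 3 / 4 := by
      rw [hx] at key; linear_combination (-1 : ℝ) * key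
    have : (w.im - Real.sqrt 3 / 2) * (w.im + Real.sqrt 3 / 2) = 0 := by
      nlinarith [hy2, hs3]
    rcases mul_eq_zero.1 this with h4 | h4
    · left
      apply Complex.ext <;> simp [hx]
      linarith
    · right
      apply Complex.ext <;> simp [hx]
      linarith
  · rintro (rfl | rfl)
    · rw [hA]
      have hr : (((((1 - 2 * γ) / 2 : ℝ) : ℂ) + Complex.I * (Real.sqrt 3 / 2 : ℝ)).re ^ 2
          + ((((1 - 2 * γ) / 2 : ℝ) : ℂ) + Complex.I * (Real.sqrt 3 / 2 : ℝ)).im ^ 2 : ℝ)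
          = 1 - γ + γ * γ := by
        simp
        nlinarith [hs3]
      rw [hr]
      have hc : (starRingEnd ℂ) ((((1 - 2 * γ) / 2 : ℝ) : ℂ)
            + Complex.I * (Real.sqrt 3 / 2 : ℝ))
          = (((1 - 2 * γ) / 2 : ℝ) : ℂ) - Complex.I * (Real.sqrt 3 / 2 : ℝ) := by
        rw [map_add, map_mul, Complex.conj_I, Complex.conj_ofReal, Complex.conj_ofReal]
        ring
      rw [hc]
      push_cast
      ring
    · rw [hA]
      have hr : (((((1 - 2 * γ) / 2 : ℝ) : ℂ) - Complex.I * (Real.sqrt 3 / 2 : ℝ)).re ^ 2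
          + ((((1 - 2 * γ) / 2 : ℝ) : ℂ) - Complex.I * (Real.sqrt 3 / 2 : ℝ)).im ^ 2 : ℝ)
          = 1 - γ + γ * γ := by
        simp
        nlinarith [hs3]
      rw [hr]
      have hc : (starRingEnd ℂ) ((((1 - 2 * γ) / 2 : ℝ) : ℂ)
            - Complex.I * (Real.sqrt 3 / 2 : ℝ))
          = (((1 - 2 * γ) / 2 : ℝ) : ℂ) + Complex.I * (Real.sqrt 3 / 2 : ℝ) := by
        rw [map_sub, map_mul, Complex.conj_I, Complex.conj_ofReal, Complex.conj_ofReal]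
        ring
      rw [hc]
      push_cast
      ring
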